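/- For every p ∈ [0,1]^n, every i ∈ [n], and every 0 ≤ t ≤ n − 1: if p_i ≠ 1 then q′_t = (1 − p_i)^{−1} · Σ_{s=0}^{t} q_s · (p_i/(p_i − 1))^{t−s}, and if p_i ≠ 0 then q′_t = (p_i)^{−1} · Σ_{s=0}^{n−t−1} q_{t+s+1} · ((p_i − 1)/p_i)^{s}, where q_s := Pr_{X∼p}[ |V_X| = s ] and q′_t := Pr_{X∼p}[ |V_X ∖ {i}| = t ]. -/

import Mathlib

open Finset

/-- `Pr_p[X] = ∏_{v ∈ V_X} p_v · ∏_{u ∉ V_X} (1 - p_u)`. -/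
noncomputable def prOf {n : ℕ} (p : Fin n → ℝ) (X : Fin n → Bool) : ℝ :=
  ∏ v, if X v then p v else 1 - p v

/-- The chosen subset `V_X = {v : X_v = 1}`. -/
def chosen {n : ℕ} (X : Fin n → Bool) : Finset (Fin n) :=
  Finset.univ.filter (fun v => X v = true)

/-- `q_t = Pr_{X∼p}[|V_X| = t]`. -/
noncomputable def qcard {n : ℕ} (p : Fin n → ℝ) (t : ℤ) : ℝ :=
  ∑ X ∈ Finset.univ.filter (fun X : Fin n → Bool => ((chosen X).card : ℤ) = t), prOf p X

/-- `q′_t = Pr_{X∼p}[|V_X ∖ {i}| = t]`. -/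
noncomputable def qcardErase {n : ℕ} (p : Fin n → ℝ) (i : Fin n) (s : ℤ) : ℝ :=
  ∑ X ∈ Finset.univ.filter
      (fun X : Fin n → Bool => (((chosen X).erase i).card : ℤ) = s), prOf p X

lemma erase_chosen_update {n : ℕ} (X : Fin n → Bool) (i : Fin n) (b : Bool) :
    (chosen (Function.update X i b)).erase i = (chosen X).erase i := by
  ext v
  simp only [Finset.mem_erase, chosen, Finset.mem_filter, Finset.mem_univ, true_and]
  constructor
  · rintro ⟨hv, h⟩; exact ⟨hv, by rwa [Function.update_of_ne hv] at h⟩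
  · rintro ⟨hv, h⟩; exact ⟨hv, by rwa [Function.update_of_ne hv]⟩

lemma prOf_update_false {n : ℕ} (p : Fin n → ℝ) (i : Fin n) (X : Fin n → Bool)
    (hX : X i = true) :
    (1 - p i) * prOf p X = p i * prOf p (Function.update X i false) := by
  unfold prOf
  rw [← Finset.prod_erase_mul _ _ (Finset.mem_univ i),
      ← Finset.prod_erase_mul _ _ (Finset.mem_univ i)]
  have h1 : ∀ v ∈ Finset.univ.erase i,
      (if X v then p v else 1 - p v) =
      (if Function.update X i false v then p v else 1 - p v) := by
    intro v hv
    rw [Function.update_of_ne (Finset.mem_erase.mp hv).1]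
  rw [Finset.prod_congr rfl h1, hX, Function.update_self]
  simp; ring

noncomputable def sumA {n : ℕ} (p : Fin n → ℝ) (i : Fin n) (b : Bool) (s : ℤ) : ℝ :=
  ∑ X ∈ Finset.univ.filter
      (fun X : Fin n → Bool => X i = b ∧ (((chosen X).erase i).card : ℤ) = s), prOf p X

lemma sumA_add {n : ℕ} (p : Fin n → ℝ) (i : Fin n) (s : ℤ) :
    sumA p i true s + sumA p i false s = qcardErase p i s := by
  unfold sumA qcardErase
  rw [← Finset.sum_filter_add_sum_filter_not
      (Finset.univ.filter (fun X : Fin n → Bool => (((chosen X).erase i).card : ℤ) = s))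
      (fun X => X i = true)]
  rw [Finset.filter_filter, Finset.filter_filter]
  congr 1
  · congr 1; ext X; simp [and_comm]
  · congr 1; ext X; simp [and_comm]

lemma sumA_cross {n : ℕ} (p : Fin n → ℝ) (i : Fin n) (s : ℤ) :
    (1 - p i) * sumA p i true s = p i * sumA p i false s := by
  unfold sumA
  rw [Finset.mul_sum, Finset.mul_sum]
  refine Finset.sum_nbij' (fun X => Function.update X i false)
    (fun X => Function.update X i true) ?_ ?_ ?_ ?_ ?_
  · intro X hX
    simp only [Finset.mem_filter, Finset.mem_univ, true_and] at hX ⊢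
    exact ⟨Function.update_self .., by rw [erase_chosen_update]; exact hX.2⟩
  · intro X hX
    simp only [Finset.mem_filter, Finset.mem_univ, true_and] at hX ⊢
    exact ⟨Function.update_self .., by rw [erase_chosen_update]; exact hX.2⟩
  · intro X hX
    simp only [Finset.mem_filter, Finset.mem_univ, true_and] at hX
    funext v
    rcases eq_or_ne v i with rfl | hv
    · simp [hX.1]
    · simp [Function.update_of_ne hv]
  · intro X hX
    simp only [Finset.mem_filter, Finset.mem_univ, true_and] at hX
    funext v
    rcases eq_or_ne v i with rfl | hv
    · simp [hX.1]
    · simp [Function.update_of_ne hv]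
  · intro X hX
    simp only [Finset.mem_filter, Finset.mem_univ, true_and] at hX
    exact prOf_update_false p i X hX.1

lemma sumA_true {n : ℕ} (p : Fin n → ℝ) (i : Fin n) (s : ℤ) :
    sumA p i true s = p i * qcardErase p i s := by
  have h1 := sumA_cross p i s
  have h2 := sumA_add p i s
  rw [← h2]; linear_combination h1

lemma sumA_false {n : ℕ} (p : Fin n → ℝ) (i : Fin n) (s : ℤ) :
    sumA p i false s = (1 - p i) * qcardErase p i s := by
  have h1 := sumA_cross p i s
  have h2 := sumA_add p i s
  rw [← h2]; linear_combination -h1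

lemma mem_chosen {n : ℕ} (X : Fin n → Bool) (v : Fin n) : v ∈ chosen X ↔ X v = true := by
  simp [chosen]

lemma qcard_rec {n : ℕ} (p : Fin n → ℝ) (i : Fin n) (t : ℤ) :
    qcard p t = p i * qcardErase p i (t - 1) + (1 - p i) * qcardErase p i t := by
  rw [← sumA_true, ← sumA_false]
  unfold qcard sumA
  rw [← Finset.sum_filter_add_sum_filter_not
      (Finset.univ.filter (fun X : Fin n → Bool => ((chosen X).card : ℤ) = t))
      (fun X => X i = true), Finset.filter_filter, Finset.filter_filter]
  congr 1
  · congr 1; ext X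
    simp only [Finset.mem_filter, Finset.mem_univ, true_and]
    constructor
    · rintro ⟨hc, hi⟩
      refine ⟨hi, ?_⟩
      have : i ∈ chosen X := (mem_chosen X i).2 hi
      rw [Finset.card_erase_of_mem this]
      have hpos : 0 < (chosen X).card := Finset.card_pos.2 ⟨i, this⟩
      omega
    · rintro ⟨hi, hc⟩
      refine ⟨?_, hi⟩
      have : i ∈ chosen X := (mem_chosen X i).2 hi
      rw [Finset.card_erase_of_mem this] at hc
      have hpos : 0 < (chosen X).card := Finset.card_pos.2 ⟨i, this⟩
      omega
  · congr 1; ext X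
    simp only [Finset.mem_filter, Finset.mem_univ, true_and, Bool.not_eq_true]
    have : i ∉ chosen X ↔ X i = false := by simp [mem_chosen]
    constructor
    · rintro ⟨hc, hi⟩
      rw [Finset.erase_eq_of_notMem (this.2 hi)]
      exact ⟨hi, hc⟩
    · rintro ⟨hi, hc⟩
      rw [Finset.erase_eq_of_notMem (this.2 hi)] at hc
      exact ⟨hc, hi⟩

lemma qcardErase_neg {n : ℕ} (p : Fin n → ℝ) (i : Fin n) (s : ℤ) (hs : s < 0) :
    qcardErase p i s = 0 := by
  unfold qcardErase
  rw [Finset.filter_false_of_mem, Finset.sum_empty]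
  intro X _
  omega

lemma qcardErase_ge {n : ℕ} (p : Fin n → ℝ) (i : Fin n) (s : ℤ) (hs : (n : ℤ) ≤ s) :
    qcardErase p i s = 0 := by
  unfold qcardErase
  rw [Finset.filter_false_of_mem, Finset.sum_empty]
  intro X _
  have h1 : ((chosen X).erase i).card < n := by
    have := Finset.card_erase_of_mem (Finset.mem_univ i)
    have hsub : (chosen X).erase i ⊆ Finset.univ.erase i :=
      Finset.erase_subset_erase i (Finset.subset_univ _)
    have := Finset.card_le_card hsub
    have hn : (Finset.univ : Finset (Fin n)).card = n := by simp
    have hpos : 0 < n := i.pos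
    omega
  omega

lemma formula1 {n : ℕ} (p : Fin n → ℝ) (i : Fin n) (hpi : p i ≠ 1) : ∀ t : ℕ,
    qcardErase p i (t : ℤ)
      = (1 - p i)⁻¹ * ∑ s ∈ Finset.range (t + 1),
          qcard p (s : ℤ) * (p i / (p i - 1)) ^ (t - s) := by
  have h1p : 1 - p i ≠ 0 := sub_ne_zero.2 (Ne.symm hpi)
  have hpm : p i - 1 ≠ 0 := sub_ne_zero.2 hpi
  intro t
  induction t with
  | zero =>
    have hrec := qcard_rec p i 0
    rw [qcardErase_neg p i (0 - 1) (by norm_num)] at hrec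
    simp only [Nat.cast_zero, zero_add, Finset.sum_range_one, Nat.sub_self, pow_zero, mul_one]
    field_simp
    linarith
  | succ t IH =>
    have hrec := qcard_rec p i ((t : ℤ) + 1)
    have hsimp : ((t : ℤ) + 1 - 1) = (t : ℤ) := by ring
    rw [hsimp] at hrec
    have hsum : ∑ s ∈ Finset.range (t + 1), qcard p (s : ℤ) * (p i / (p i - 1)) ^ (t + 1 - s)
        = (p i / (p i - 1)) * ∑ s ∈ Finset.range (t + 1),
            qcard p (s : ℤ) * (p i / (p i - 1)) ^ (t - s) := by
      rw [Finset.mul_sum]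
      refine Finset.sum_congr rfl fun s hs => ?_
      have hle : t + 1 - s = (t - s) + 1 := by
        have := Finset.mem_range.1 hs; omega
      rw [hle, pow_succ]; ring
    rw [Finset.sum_range_succ, hsum]
    have hc : ((t + 1 : ℕ) : ℤ) = (t : ℤ) + 1 := by push_cast; ring
    rw [hc]
    rw [IH] at hrec
    have : qcardErase p i ((t : ℤ) + 1)
        = (1 - p i)⁻¹ * (qcard p ((t : ℤ) + 1)
            - p i * ((1 - p i)⁻¹ * ∑ s ∈ Finset.range (t + 1),
                qcard p (s : ℤ) * (p i / (p i - 1)) ^ (t - s))) := by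
      field_simp
      field_simp at hrec
      linarith
    rw [this]
    simp only [Nat.sub_self, pow_zero, mul_one]
    field_simp
    ring

lemma formula2 {n : ℕ} (p : Fin n → ℝ) (i : Fin n) (hpi : p i ≠ 0) : ∀ m : ℕ, ∀ t : ℕ,
    n - t = m →
    qcardErase p i (t : ℤ)
      = (p i)⁻¹ * ∑ s ∈ Finset.range m,
          qcard p ((t : ℤ) + s + 1) * ((p i - 1) / p i) ^ s := by
  intro m
  induction m with
  | zero =>
    intro t h
    rw [qcardErase_ge p i t (by exact_mod_cast by omega)]
    simp
  | succ m IH =>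
    intro t h
    have ht1 : n - (t + 1) = m := by omega
    have IH' := IH (t + 1) ht1
    have hrec := qcard_rec p i ((t : ℤ) + 1)
    have hsimp : ((t : ℤ) + 1 - 1) = (t : ℤ) := by ring
    rw [hsimp] at hrec
    rw [Finset.sum_range_succ']
    have hsum : ∑ s ∈ Finset.range m,
          qcard p ((t : ℤ) + (s + 1 : ℕ) + 1) * ((p i - 1) / p i) ^ (s + 1)
        = ((p i - 1) / p i) * ∑ s ∈ Finset.range m,
            qcard p (((t + 1 : ℕ) : ℤ) + s + 1) * ((p i - 1) / p i) ^ s := by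
      rw [Finset.mul_sum]
      refine Finset.sum_congr rfl fun s hs => ?_
      have : (t : ℤ) + (s + 1 : ℕ) + 1 = ((t + 1 : ℕ) : ℤ) + s + 1 := by push_cast; ring
      rw [this, pow_succ]; ring
    rw [hsum]
    push_cast at IH' ⊢
    rw [IH'] at hrec
    simp only [add_zero, pow_zero, mul_one]
    field_simp
    field_simp at hrec
    linarith

/-- the two explicit solutions of the one-node-removal recursion:
for `0 ≤ t ≤ n − 1`, if `p_i ≠ 1` then
`q′_t = (1 − p_i)⁻¹ · Σ_{s=0}^{t} q_s · (p_i/(p_i − 1))^{t−s}`, and if `p_i ≠ 0` then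
`q′_t = p_i⁻¹ · Σ_{s=0}^{n−t−1} q_{t+s+1} · ((p_i − 1)/p_i)^{s}`. -/
theorem poisson_binomial_removal_formulas
    (n : ℕ) (p : Fin n → ℝ) (hp : ∀ v, p v ∈ Set.Icc (0 : ℝ) 1) (i : Fin n)
    (t : ℕ) (ht : t < n) :
    (p i ≠ 1 →
      qcardErase p i (t : ℤ)
        = (1 - p i)⁻¹ *
            ∑ s ∈ Finset.range (t + 1), qcard p (s : ℤ) * (p i / (p i - 1)) ^ (t - s)) ∧
    (p i ≠ 0 →
      qcardErase p i (t : ℤ)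
        = (p i)⁻¹ *
            ∑ s ∈ Finset.range (n - t), qcard p ((t : ℤ) + s + 1) * ((p i - 1) / p i) ^ s) := by
  constructor
  · intro hpi
    exact formula1 p i hpi t
  · intro hpi
    exact formula2 p i hpi (n - t) t rfl
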